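/- arXiv:1611.09505 — 2 statements merged into one kernel-verified Lean document; each statement's English description precedes it below -/
import Mathlib

section
/- The double integral (1/(8π)) ∬_{ℝ²} u_1(x,t)^2 dx dt equals 1, where u_1(x,t) = 4(1 - x^2 + t^2)/(1 + x^2 + t^2)^2. -/
open MeasureTheory Real Filter Topology

-- rational tail limit
lemma tend0_atTop (a b c e : ℝ) (he : 0 < e) :
    Tendsto (fun t : ℝ => t * (a + b * t ^ 2 + c * t ^ 4) / (e + t ^ 2) ^ 3) atTop (𝓝 0) := by
  apply squeeze_zero_norm' (a := fun t : ℝ => (|a| + |b| + |c|) / t)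
  · filter_upwards [eventually_ge_atTop (1 : ℝ)] with t ht
    have ht0 : (0:ℝ) < t := lt_of_lt_of_le one_pos ht
    have h2 : (1:ℝ) ≤ t ^ 2 := by nlinarith
    have h6 : t ^ 6 ≤ (e + t ^ 2) ^ 3 := by nlinarith [sq_nonneg t, sq_nonneg (e + t^2), mul_pos he (pow_pos ht0 2)]
    have h6pos : (0:ℝ) < t ^ 6 := by positivity
    have hnum : |t * (a + b * t ^ 2 + c * t ^ 4)| ≤ (|a| + |b| + |c|) * t ^ 5 := by
      rw [abs_mul, abs_of_pos ht0]
      have : |a + b * t ^ 2 + c * t ^ 4| ≤ |a| + |b| * t ^ 2 + |c| * t ^ 4 := by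
        calc |a + b * t ^ 2 + c * t ^ 4| ≤ |a + b * t ^ 2| + |c * t ^ 4| := abs_add_le _ _
          _ ≤ |a| + |b * t ^ 2| + |c * t ^ 4| := by gcongr; exact abs_add_le _ _
          _ = |a| + |b| * t ^ 2 + |c| * t ^ 4 := by
              rw [abs_mul, abs_mul, abs_of_nonneg (by positivity : (0:ℝ) ≤ t^2),
                abs_of_nonneg (by positivity : (0:ℝ) ≤ t^4)]
      have h14 : (1:ℝ) ≤ t ^ 4 := by nlinarith [sq_nonneg (t ^ 2 - 1)]
      have h15 : t ≤ t ^ 5 := by nlinarith [mul_le_mul_of_nonneg_left h14 ht0.le]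
      have h35 : t ^ 3 ≤ t ^ 5 := by
        nlinarith [mul_nonneg (pow_pos ht0 3).le (sub_nonneg.2 h2)]
      calc t * |a + b * t ^ 2 + c * t ^ 4| ≤ t * (|a| + |b| * t ^ 2 + |c| * t ^ 4) :=
            mul_le_mul_of_nonneg_left this ht0.le
        _ ≤ (|a| + |b| + |c|) * t ^ 5 := by
            nlinarith [mul_le_mul_of_nonneg_left h15 (abs_nonneg a),
              mul_le_mul_of_nonneg_left h35 (abs_nonneg b)]
    rw [norm_eq_abs, abs_div, abs_of_pos (by positivity : (0:ℝ) < (e + t^2)^3)]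
    calc |t * (a + b * t ^ 2 + c * t ^ 4)| / (e + t ^ 2) ^ 3
        ≤ ((|a| + |b| + |c|) * t ^ 5) / t ^ 6 := by
          apply div_le_div₀ (by positivity) hnum h6pos h6
      _ = (|a| + |b| + |c|) / t := by
          rw [eq_div_iff (ne_of_gt ht0)]; field_simp
  · exact tendsto_const_nhds.div_atTop tendsto_id

lemma tend0_atBot (a b c e : ℝ) (he : 0 < e) :
    Tendsto (fun t : ℝ => t * (a + b * t ^ 2 + c * t ^ 4) / (e + t ^ 2) ^ 3) atBot (𝓝 0) := by
  have h := (tend0_atTop a b c e he).comp tendsto_neg_atBot_atTop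
  have : (fun t : ℝ => -(t * (a + b * t ^ 2 + c * t ^ 4) / (e + t ^ 2) ^ 3)) =
      ((fun t : ℝ => t * (a + b * t ^ 2 + c * t ^ 4) / (e + t ^ 2) ^ 3) ∘ (fun t : ℝ => -t)) := by
    funext t; simp only [Function.comp_apply]; ring
  have h2 : Tendsto (fun t : ℝ => -(t * (a + b * t ^ 2 + c * t ^ 4) / (e + t ^ 2) ^ 3)) atBot (𝓝 0) := by
    rw [this]; exact h
  simpa using h2.neg

lemma integrand_bound (x t : ℝ) :
    (4 * (1 - x ^ 2 + t ^ 2) / (1 + x ^ 2 + t ^ 2) ^ 2) ^ 2 ≤ 16 / (1 + t ^ 2) := by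
  have hA : (1 - x ^ 2 + t ^ 2) ^ 2 ≤ (1 + x ^ 2 + t ^ 2) ^ 2 := by
    nlinarith [sq_nonneg x, sq_nonneg (x * t)]
  have hB : (1:ℝ) + t ^ 2 ≤ (1 + x ^ 2 + t ^ 2) ^ 2 := by
    nlinarith [sq_nonneg (x ^ 2 + t ^ 2), sq_nonneg x, sq_nonneg t]
  rw [div_pow, div_le_div_iff₀ (by positivity) (by positivity)]
  have := mul_le_mul hA hB (by positivity) (sq_nonneg _)
  nlinarith [this]

lemma integrable_slice (x : ℝ) :
    Integrable (fun t : ℝ => (4 * (1 - x ^ 2 + t ^ 2) / (1 + x ^ 2 + t ^ 2) ^ 2) ^ 2) := by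
  apply Integrable.mono' (integrable_inv_one_add_sq.const_mul 16)
  · apply Measurable.aestronglyMeasurable; fun_prop (disch := positivity)
  · filter_upwards with t
    rw [norm_eq_abs, abs_of_nonneg (sq_nonneg _)]
    have := integrand_bound x t
    calc (4 * (1 - x ^ 2 + t ^ 2) / (1 + x ^ 2 + t ^ 2) ^ 2) ^ 2 ≤ 16 / (1 + t ^ 2) := this
      _ = 16 * (1 + t ^ 2)⁻¹ := by ring

lemma integrable2d :
    Integrable (fun p : ℝ × ℝ => (4 * (1 - p.1 ^ 2 + p.2 ^ 2) / (1 + p.1 ^ 2 + p.2 ^ 2) ^ 2) ^ 2) := by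
  have hbase : Integrable (fun p : ℝ × ℝ => ((1:ℝ) + ‖p‖ ^ 2) ^ (-(4:ℝ) / 2)) :=
    integrable_rpow_neg_one_add_norm_sq (by simp [Module.finrank_prod]; norm_num)
  apply Integrable.mono' (hbase.const_mul 16)
  · apply Measurable.aestronglyMeasurable; fun_prop (disch := positivity)
  · filter_upwards with p
    have hnorm : ‖p‖ ^ 2 ≤ p.1 ^ 2 + p.2 ^ 2 := by
      rw [Prod.norm_def, norm_eq_abs, norm_eq_abs]
      rcases le_total |p.1| |p.2| with h | h
      · rw [max_eq_right h]; nlinarith [sq_abs p.2, sq_nonneg p.1]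
      · rw [max_eq_left h]; nlinarith [sq_abs p.1, sq_nonneg p.2]
    have hrw : ((1:ℝ) + ‖p‖ ^ 2) ^ (-(4:ℝ) / 2) = (((1:ℝ) + ‖p‖ ^ 2) ^ (2:ℕ))⁻¹ := by
      rw [show (-(4:ℝ) / 2) = ((-2 : ℤ) : ℝ) by norm_num, Real.rpow_intCast, zpow_neg]
      norm_num
    rw [norm_eq_abs, abs_of_nonneg (sq_nonneg _), hrw]
    have h1 : (4 * (1 - p.1 ^ 2 + p.2 ^ 2) / (1 + p.1 ^ 2 + p.2 ^ 2) ^ 2) ^ 2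
        ≤ 16 / (1 + p.1 ^ 2 + p.2 ^ 2) ^ 2 := by
      have hA : (1 - p.1 ^ 2 + p.2 ^ 2) ^ 2 ≤ (1 + p.1 ^ 2 + p.2 ^ 2) ^ 2 := by
        nlinarith [sq_nonneg p.1, sq_nonneg (p.1 * p.2)]
      rw [div_pow, div_le_div_iff₀ (by positivity) (by positivity)]
      nlinarith [hA, pow_pos (show (0:ℝ) < 1 + p.1 ^ 2 + p.2 ^ 2 by positivity) 2]
    have hBA : ((1:ℝ) + ‖p‖ ^ 2) ^ 2 ≤ (1 + p.1 ^ 2 + p.2 ^ 2) ^ 2 := by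
      have h0 : (0:ℝ) ≤ 1 + ‖p‖ ^ 2 := by positivity
      nlinarith [hnorm, sq_nonneg ‖p‖]
    have h2 : 16 / (1 + p.1 ^ 2 + p.2 ^ 2) ^ 2 ≤ 16 * (((1:ℝ) + ‖p‖ ^ 2) ^ (2:ℕ))⁻¹ := by
      calc 16 / (1 + p.1 ^ 2 + p.2 ^ 2) ^ 2 ≤ 16 / ((1:ℝ) + ‖p‖ ^ 2) ^ 2 :=
            div_le_div_of_nonneg_left (by norm_num) (by positivity) hBA
        _ = 16 * (((1:ℝ) + ‖p‖ ^ 2) ^ (2:ℕ))⁻¹ := by rw [div_eq_mul_inv]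
    linarith



lemma inner_integral (x : ℝ) :
    ∫ t : ℝ, (4 * (1 - x ^ 2 + t ^ 2) / (1 + x ^ 2 + t ^ 2) ^ 2) ^ 2
      = π * (4 * (2 - 2 * x ^ 2 + x ^ 4) / (1 + x ^ 2) ^ 3) / Real.sqrt (1 + x ^ 2) := by
  have hx : (0:ℝ) < 1 + x ^ 2 := by positivity
  set s : ℝ := Real.sqrt (1 + x ^ 2) with hsdef
  have hs0 : 0 < s := Real.sqrt_pos.2 hx
  have hs : s ^ 2 = 1 + x ^ 2 := Real.sq_sqrt hx.le
  set C : ℝ := 4 * (2 - 2 * x ^ 2 + x ^ 4) / (1 + x ^ 2) ^ 3 with hC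
  set q0 : ℝ := 4 * (2 - 6 * x ^ 2 + 3 * x ^ 4) / (1 + x ^ 2) with hq0
  set q1 : ℝ := 16 * (3 - 6 * x ^ 2 + x ^ 4) / (3 * (1 + x ^ 2) ^ 2) with hq1
  set F : ℝ → ℝ := fun t => C / s * arctan (t / s)
      + t * (q0 + q1 * t ^ 2 + C * t ^ 4) / ((1 + x ^ 2) + t ^ 2) ^ 3 with hF
  have hderiv : ∀ t, HasDerivAt F ((4 * (1 - x ^ 2 + t ^ 2) / (1 + x ^ 2 + t ^ 2) ^ 2) ^ 2) t := by
    intro t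
    have hden : (0:ℝ) < 1 + x ^ 2 + t ^ 2 := by positivity
    have h1 : HasDerivAt (fun t : ℝ => arctan (t / s)) (1 / (1 + (t / s) ^ 2) * (1 / s)) t := by
      simpa using ((hasDerivAt_id t).div_const s).arctan
    have ha : HasDerivAt (fun t : ℝ => q0 + q1 * t ^ 2 + C * t ^ 4)
        (q1 * (2 * t) + C * (4 * t ^ 3)) t := by
      have := (((hasDerivAt_pow 2 t).const_mul q1).const_add q0).add ((hasDerivAt_pow 4 t).const_mul C)
      exact this.congr_deriv (by ring)
    have h2 : HasDerivAt (fun t : ℝ => t * (q0 + q1 * t ^ 2 + C * t ^ 4))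
        (q0 + 3 * q1 * t ^ 2 + 5 * C * t ^ 4) t := by
      have := (hasDerivAt_id t).mul ha
      exact this.congr_deriv (by simp; ring)
    have hb : HasDerivAt (fun t : ℝ => (1 + x ^ 2) + t ^ 2) (2 * t) t := by
      simpa using (hasDerivAt_pow 2 t).const_add (1 + x ^ 2)
    have h3 := hb.pow 3
    have h4 := h2.div h3 (by simp only [Pi.pow_apply]; positivity)
    have h5 := (h1.const_mul (C / s)).add h4
    refine h5.congr_deriv ?_
    simp only [Pi.pow_apply]
    have harct : C / s * (1 / (1 + (t / s) ^ 2) * (1 / s)) = C / ((1 + x ^ 2) + t ^ 2) := by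
      rw [← hs]; field_simp
    rw [harct, hC, hq0, hq1]
    push_cast
    field_simp
    ring
  have hdivtop : Tendsto (fun t : ℝ => t / s) atTop atTop := tendsto_id.atTop_div_const hs0
  have hdivbot : Tendsto (fun t : ℝ => t / s) atBot atBot := by
    exact tendsto_id.atBot_div_const hs0
  have htop : Tendsto F atTop (𝓝 (C / s * (π / 2) + 0)) := by
    apply Tendsto.add
    · exact (((tendsto_arctan_atTop.mono_right nhdsWithin_le_nhds).comp hdivtop).const_mul (C / s))
    · exact tend0_atTop q0 q1 C (1 + x ^ 2) hx
  have hbot : Tendsto F atBot (𝓝 (C / s * (-(π / 2)) + 0)) := by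
    apply Tendsto.add
    · exact (((tendsto_arctan_atBot.mono_right nhdsWithin_le_nhds).comp hdivbot).const_mul (C / s))
    · exact tend0_atBot q0 q1 C (1 + x ^ 2) hx
  have key := integral_of_hasDerivAt_of_tendsto hderiv (by simpa using integrable_slice x) hbot htop
  rw [show (∫ t : ℝ, (4 * (1 - x ^ 2 + t ^ 2) / (1 + x ^ 2 + t ^ 2) ^ 2) ^ 2) =
      ∫ t : ℝ, (fun t : ℝ => (4 * (1 - x ^ 2 + t ^ 2) / (1 + x ^ 2 + t ^ 2) ^ 2) ^ 2) t from rfl, key]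
  ring

lemma outer_deriv (x : ℝ) :
    HasDerivAt (fun y : ℝ => π * (4 * (y * (2 + 2 * y ^ 2 + y ^ 4))) / ((1 + y ^ 2) ^ 2 * Real.sqrt (1 + y ^ 2)))
      (π * (4 * (2 - 2 * x ^ 2 + x ^ 4) / (1 + x ^ 2) ^ 3) / Real.sqrt (1 + x ^ 2)) x := by
  have hx : (0:ℝ) < 1 + x ^ 2 := by positivity
  have hs0 : 0 < Real.sqrt (1 + x ^ 2) := Real.sqrt_pos.2 hx
  set s : ℝ := Real.sqrt (1 + x ^ 2) with hsdef
  have hs : s ^ 2 = 1 + x ^ 2 := Real.sq_sqrt hx.le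
  have h0 : HasDerivAt (fun y : ℝ => 1 + y ^ 2) (2 * x) x := by
    simpa using (hasDerivAt_pow 2 x).const_add 1
  have hsq : HasDerivAt (fun y : ℝ => Real.sqrt (1 + y ^ 2)) (x / s) x := by
    have h' := (Real.hasDerivAt_sqrt (by positivity : (1:ℝ) + x ^ 2 ≠ 0)).comp x h0
    have h'' : HasDerivAt (fun y : ℝ => Real.sqrt (1 + y ^ 2))
        (1 / (2 * Real.sqrt (1 + x ^ 2)) * (2 * x)) x := h'
    convert h'' using 1
    field_simp
    rw [← hsdef]
  have hnum : HasDerivAt (fun y : ℝ => π * (4 * (y * (2 + 2 * y ^ 2 + y ^ 4))))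
      (π * (4 * (2 + 6 * x ^ 2 + 5 * x ^ 4))) x := by
    have ha : HasDerivAt (fun y : ℝ => 2 + 2 * y ^ 2 + y ^ 4) (2 * (2 * x) + 4 * x ^ 3) x := by
      have := (((hasDerivAt_pow 2 x).const_mul 2).const_add 2).add (hasDerivAt_pow 4 x)
      exact this.congr_deriv (by push_cast; ring)
    have := ((hasDerivAt_id x).mul ha).const_mul (π * 4)
    convert this using 1
    · rfl
    · rfl
    · funext y; simp only [Pi.mul_apply, id_eq]; ring
    · simp only [id_eq]; ring
  have hpow := h0.pow 2
  have hden := hpow.mul hsq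
  have hdne : (1 + x ^ 2) ^ 2 * s ≠ 0 := by positivity
  have h := hnum.div hden hdne
  refine h.congr_deriv ?_
  simp only [Pi.mul_apply, Pi.pow_apply]
  symm
  rw [eq_div_iff (by positivity : ((1 + x ^ 2) ^ 2 * s) ^ 2 ≠ 0)]
  have h3 : s ^ 3 = (1 + x ^ 2) * s := by rw [pow_succ, hs]
  have h4 : s ^ 4 = (1 + x ^ 2) ^ 2 := by rw [show 4 = 2*2 from rfl, pow_mul, hs]
  field_simp
  ring_nf
  rw [← hsdef]
  linear_combination (-2 * x ^ 2 - 4 * x ^ 4 - 3 * x ^ 6 - x ^ 8) * hs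

lemma outer_cont : ContinuousAt
    (fun u : ℝ => π * (4 * (2 * u ^ 2 + 2 * u + 1)) / ((u + 1) ^ 2 * Real.sqrt (u + 1))) 0 := by
  apply ContinuousAt.div
  · fun_prop
  · exact ContinuousAt.mul (by fun_prop) (Real.continuous_sqrt.continuousAt.comp (by fun_prop))
  · norm_num

lemma outer_tendsto_atTop :
    Tendsto (fun x : ℝ => π * (4 * (x * (2 + 2 * x ^ 2 + x ^ 4))) /
      ((1 + x ^ 2) ^ 2 * Real.sqrt (1 + x ^ 2))) atTop (𝓝 (4 * π)) := by
  have hinv : Tendsto (fun x : ℝ => (x ^ 2)⁻¹) atTop (𝓝 0) := by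
    have h1 : Tendsto (fun x : ℝ => x ^ 2) atTop atTop := tendsto_pow_atTop (by norm_num)
    exact tendsto_inv_atTop_zero.comp h1
  have hcomp := (outer_cont.tendsto).comp hinv
  have hval : π * (4 * (2 * (0:ℝ) ^ 2 + 2 * 0 + 1)) / ((0 + 1) ^ 2 * Real.sqrt (0 + 1)) = 4 * π := by
    norm_num; ring
  rw [hval] at hcomp
  apply hcomp.congr'
  filter_upwards [eventually_ge_atTop (1:ℝ)] with x hx
  have hx0 : (0:ℝ) < x := lt_of_lt_of_le one_pos hx
  have hs0 : (0:ℝ) < Real.sqrt (1 + x ^ 2) := Real.sqrt_pos.2 (by positivity)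
  have hsq : Real.sqrt ((x ^ 2)⁻¹ + 1) = Real.sqrt (1 + x ^ 2) / x := by
    rw [show (x ^ 2)⁻¹ + 1 = (1 + x ^ 2) / x ^ 2 by field_simp,
      Real.sqrt_div (by positivity), Real.sqrt_sq hx0.le]
  simp only [Function.comp_apply]
  rw [hsq]
  have hsne : Real.sqrt (1 + x ^ 2) ≠ 0 := ne_of_gt hs0
  field_simp

lemma outer_tendsto_atBot :
    Tendsto (fun x : ℝ => π * (4 * (x * (2 + 2 * x ^ 2 + x ^ 4))) /
      ((1 + x ^ 2) ^ 2 * Real.sqrt (1 + x ^ 2))) atBot (𝓝 (-(4 * π))) := by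
  have hinv : Tendsto (fun x : ℝ => (x ^ 2)⁻¹) atBot (𝓝 0) := by
    have h1 : Tendsto (fun x : ℝ => x ^ 2) atBot atTop := by
      have h := (tendsto_pow_atTop (n := 2) (by norm_num : (2:ℕ) ≠ 0) (α := ℝ)).comp
        tendsto_neg_atBot_atTop
      have h2 : Tendsto (fun x : ℝ => (-x) ^ 2) atBot atTop := h
      simpa [neg_sq] using h2
    exact tendsto_inv_atTop_zero.comp h1
  have hcomp := ((outer_cont.neg).tendsto).comp hinv
  have hval : -(π * (4 * (2 * (0:ℝ) ^ 2 + 2 * 0 + 1)) / ((0 + 1) ^ 2 * Real.sqrt (0 + 1))) = -(4 * π) := by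
    norm_num; ring
  simp only [Pi.neg_apply] at hcomp
  rw [hval] at hcomp
  apply hcomp.congr'
  filter_upwards [eventually_le_atBot (-1:ℝ)] with x hx
  have hx0 : x < 0 := lt_of_le_of_lt hx (by norm_num)
  have hxne : x ≠ 0 := ne_of_lt hx0
  have hs0 : (0:ℝ) < Real.sqrt (1 + x ^ 2) := Real.sqrt_pos.2 (by positivity)
  have hsq : Real.sqrt ((x ^ 2)⁻¹ + 1) = Real.sqrt (1 + x ^ 2) / (-x) := by
    have h1 : (x ^ 2)⁻¹ + 1 = (1 + x ^ 2) / (-x) ^ 2 := by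
      field_simp
    rw [h1, Real.sqrt_div (by positivity), Real.sqrt_sq (by linarith)]
  simp only [Function.comp_apply, Pi.neg_apply]
  rw [hsq]
  have hsne : Real.sqrt (1 + x ^ 2) ≠ 0 := ne_of_gt hs0
  field_simp

lemma integrable_gg : Integrable (fun x : ℝ =>
    π * (4 * (2 - 2 * x ^ 2 + x ^ 4) / (1 + x ^ 2) ^ 3) / Real.sqrt (1 + x ^ 2)) := by
  apply Integrable.mono' (integrable_inv_one_add_sq.const_mul (8 * π))
  · apply Measurable.aestronglyMeasurable
    fun_prop (disch := positivity)
  · filter_upwards with x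
    have hx : (0:ℝ) < 1 + x ^ 2 := by positivity
    have hnn : (0:ℝ) ≤ 2 - 2 * x ^ 2 + x ^ 4 := by nlinarith [sq_nonneg (x ^ 2 - 1)]
    have hs1 : (1:ℝ) ≤ Real.sqrt (1 + x ^ 2) := Real.one_le_sqrt.2 (by nlinarith)
    have hpos : (0:ℝ) ≤ π * (4 * (2 - 2 * x ^ 2 + x ^ 4) / (1 + x ^ 2) ^ 3) := by positivity
    rw [norm_eq_abs, abs_of_nonneg (by positivity)]
    calc π * (4 * (2 - 2 * x ^ 2 + x ^ 4) / (1 + x ^ 2) ^ 3) / Real.sqrt (1 + x ^ 2)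
        ≤ π * (4 * (2 - 2 * x ^ 2 + x ^ 4) / (1 + x ^ 2) ^ 3) := div_le_self hpos hs1
      _ ≤ 8 * π * (1 + x ^ 2)⁻¹ := by
          rw [show (8:ℝ) * π * (1 + x ^ 2)⁻¹ = π * (8 / (1 + x ^ 2)) by ring]
          apply mul_le_mul_of_nonneg_left _ Real.pi_nonneg
          rw [div_le_div_iff₀ (by positivity) (by positivity)]
          nlinarith [sq_nonneg x, sq_nonneg (x ^ 2), pow_pos hx 2, sq_nonneg (x * (1 + x ^ 2))]

theorem stmt8 :
    (1 / (8 * π)) *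
      ∫ p : ℝ × ℝ, (4 * (1 - p.1^2 + p.2^2) / (1 + p.1^2 + p.2^2)^2)^2 = 1 := by
  have hint : (∫ p : ℝ × ℝ, (4 * (1 - p.1^2 + p.2^2) / (1 + p.1^2 + p.2^2)^2)^2) = 8 * π := by
    have h2d : Integrable (fun p : ℝ × ℝ =>
        (4 * (1 - p.1 ^ 2 + p.2 ^ 2) / (1 + p.1 ^ 2 + p.2 ^ 2) ^ 2) ^ 2)
        ((volume : Measure ℝ).prod volume) := by
      rw [← Measure.volume_eq_prod ℝ ℝ]; exact integrable2d
    calc (∫ p : ℝ × ℝ, (4 * (1 - p.1^2 + p.2^2) / (1 + p.1^2 + p.2^2)^2)^2)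
        = ∫ x : ℝ, ∫ t : ℝ, (4 * (1 - x ^ 2 + t ^ 2) / (1 + x ^ 2 + t ^ 2) ^ 2) ^ 2 := by
          rw [Measure.volume_eq_prod ℝ ℝ, MeasureTheory.integral_prod _ h2d]
      _ = ∫ x : ℝ, π * (4 * (2 - 2 * x ^ 2 + x ^ 4) / (1 + x ^ 2) ^ 3) / Real.sqrt (1 + x ^ 2) := by
          congr 1; funext x; exact inner_integral x
      _ = 4 * π - -(4 * π) := by
          exact integral_of_hasDerivAt_of_tendsto (fun x => outer_deriv x) integrable_gg
            outer_tendsto_atBot outer_tendsto_atTop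
      _ = 8 * π := by ring
  rw [hint]
  field_simp
end

section
/- Define v_1(x,t) = -2 ∂²/(∂x∂t) log(1 + x^2 + t^2) = 8xt/(1 + x^2 + t^2)^2. Then (1/(8π)) ∬_{ℝ²} v_1(x,t)^2 dx dt = 1/3. -/
open MeasureTheory Real Filter Topology Set

/-! Auxiliary lemmas -/

lemma one_add_sq_pos (u : ℝ) : (0:ℝ) < 1 + u^2 := by positivity

noncomputable def F1 (u : ℝ) : ℝ :=
  (1/16) * Real.arctan u + (1/16) * (u/(1+u^2)) + (1/24) * (u/(1+u^2)^2) - (1/6) * (u/(1+u^2)^3)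

lemma F1_hasDeriv (u : ℝ) : HasDerivAt F1 (u^2/(1+u^2)^4) u := by
  have h0 : (1:ℝ) + u^2 ≠ 0 := (one_add_sq_pos u).ne'
  have hd : HasDerivAt (fun u : ℝ => 1 + u^2) (2*u) u := by
    simpa using ((hasDerivAt_pow 2 u).const_add 1)
  have ha : HasDerivAt Real.arctan (1/(1+u^2)) u := by
    simpa [add_comm] using Real.hasDerivAt_arctan u
  have h1 : HasDerivAt (fun u : ℝ => u/(1+u^2)) ((1*(1+u^2) - u*(2*u))/((1+u^2)^2)) u :=
    (hasDerivAt_id u).div hd h0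
  have h2 : HasDerivAt (fun u : ℝ => u/(1+u^2)^2)
      ((1*((1+u^2)^2) - u*(2*(1+u^2)^1*(2*u)))/(((1+u^2)^2)^2)) u :=
    (hasDerivAt_id u).div (hd.pow 2) (pow_ne_zero 2 h0)
  have h3 : HasDerivAt (fun u : ℝ => u/(1+u^2)^3)
      ((1*((1+u^2)^3) - u*(3*(1+u^2)^2*(2*u)))/(((1+u^2)^3)^2)) u :=
    (hasDerivAt_id u).div (hd.pow 3) (pow_ne_zero 3 h0)
  have := (((ha.const_mul (1/16:ℝ)).add (h1.const_mul (1/16:ℝ))).add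
      (h2.const_mul (1/24:ℝ))).sub (h3.const_mul (1/6:ℝ))
  refine this.congr_deriv ?_
  field_simp
  ring

lemma tendsto_top_aux (k : ℕ) (hk : 1 ≤ k) :
    Tendsto (fun u : ℝ => u/(1+u^2)^k) atTop (𝓝 0) := by
  have hub : Tendsto (fun u : ℝ => u⁻¹) atTop (𝓝 0) := tendsto_inv_atTop_zero
  refine tendsto_of_tendsto_of_tendsto_of_le_of_le' tendsto_const_nhds hub ?_ ?_
  · filter_upwards [eventually_ge_atTop (1:ℝ)] with u hu
    positivity
  · filter_upwards [eventually_ge_atTop (1:ℝ)] with u hu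
    have h2 : u^2 ≤ (1+u^2)^k := by
      calc u^2 ≤ 1 + u^2 := by linarith
      _ ≤ (1+u^2)^k := le_self_pow₀ (by nlinarith) (by omega)
    rw [div_le_iff₀ (by positivity), inv_mul_eq_div, le_div_iff₀ (by positivity)]
    nlinarith

lemma tendsto_bot_aux (k : ℕ) (hk : 1 ≤ k) :
    Tendsto (fun u : ℝ => u/(1+u^2)^k) atBot (𝓝 0) := by
  have := ((tendsto_top_aux k hk).comp tendsto_neg_atBot_atTop).neg
  simp only [Function.comp_def, neg_neg, neg_sq, neg_div] at this
  simpa using this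

lemma F1_top : Tendsto F1 atTop (𝓝 (π/32)) := by
  have ha : Tendsto Real.arctan atTop (𝓝 (π/2)) :=
    tendsto_nhds_of_tendsto_nhdsWithin tendsto_arctan_atTop
  have h1 := tendsto_top_aux 1 le_rfl
  have h2 := tendsto_top_aux 2 one_le_two
  have h3 := tendsto_top_aux 3 (by norm_num)
  have := (((ha.const_mul (1/16:ℝ)).add (h1.const_mul (1/16:ℝ))).add
      (h2.const_mul (1/24:ℝ))).sub (h3.const_mul (1/6:ℝ))
  rw [show π/32 = ((1/16)*(π/2) + (1/16)*0 + (1/24)*0) - (1/6)*0 by ring]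
  exact this.congr (fun u => by simp [F1, pow_one])

lemma F1_bot : Tendsto F1 atBot (𝓝 (-(π/32))) := by
  have ha : Tendsto Real.arctan atBot (𝓝 (-(π/2))) :=
    tendsto_nhds_of_tendsto_nhdsWithin tendsto_arctan_atBot
  have h1 := tendsto_bot_aux 1 le_rfl
  have h2 := tendsto_bot_aux 2 one_le_two
  have h3 := tendsto_bot_aux 3 (by norm_num)
  have := (((ha.const_mul (1/16:ℝ)).add (h1.const_mul (1/16:ℝ))).add
      (h2.const_mul (1/24:ℝ))).sub (h3.const_mul (1/6:ℝ))
  rw [show -(π/32) = ((1/16)*(-(π/2)) + (1/16)*0 + (1/24)*0) - (1/6)*0 by ring]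
  exact this.congr (fun u => by simp [F1, pow_one])

lemma integrable1 : Integrable (fun u : ℝ => u^2/(1+u^2)^4) := by
  refine integrable_inv_one_add_sq.mono ?_ ?_
  · exact (continuous_pow 2 |>.div (by continuity) (fun u => by positivity)).aestronglyMeasurable
  · filter_upwards with u
    have h : (0:ℝ) < 1 + u^2 := by positivity
    rw [Real.norm_eq_abs, Real.norm_eq_abs, abs_of_nonneg (by positivity),
      abs_of_nonneg (by positivity), div_le_iff₀ (by positivity), inv_mul_eq_div,
      le_div_iff₀ (by positivity)]
    nlinarith [sq_nonneg u, sq_nonneg (u^2), sq_nonneg (u^2-1), pow_pos h 3]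

lemma integral1 : ∫ u : ℝ, u^2/(1+u^2)^4 = π/16 := by
  rw [MeasureTheory.integral_of_hasDerivAt_of_tendsto F1_hasDeriv integrable1 F1_bot F1_top]
  ring

lemma integrable_inner (b : ℝ) (hb : 1 ≤ b) :
    Integrable (fun y : ℝ => y^2/(b+y^2)^4) := by
  have hb0 : (0:ℝ) < b := by linarith
  refine integrable_inv_one_add_sq.mono ?_ ?_
  · exact (continuous_pow 2 |>.div (by continuity) (fun y => by positivity)).aestronglyMeasurable
  · filter_upwards with y
    have h : (0:ℝ) < 1 + y^2 := by positivity
    have h2 : (0:ℝ) < b + y^2 := by positivity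
    rw [Real.norm_eq_abs, Real.norm_eq_abs, abs_of_nonneg (by positivity),
      abs_of_nonneg (by positivity), div_le_iff₀ (by positivity), inv_mul_eq_div,
      le_div_iff₀ (by positivity)]
    have h3 : (1+y^2)^4 ≤ (b+y^2)^4 := by
      apply pow_le_pow_left₀ (by positivity) (by linarith)
    nlinarith [pow_pos h 3, sq_nonneg (y^2-1), sq_nonneg y]

lemma inner_int (b : ℝ) (hb : 1 ≤ b) :
    ∫ y : ℝ, y^2/(b + y^2)^4 = π/16 * (Real.sqrt b / b^3) := by
  have hb0 : (0:ℝ) < b := by linarith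
  set c := Real.sqrt b with hc
  have hc0 : 0 < c := Real.sqrt_pos.2 hb0
  have hc2 : c^2 = b := Real.sq_sqrt hb0.le
  have key := MeasureTheory.Measure.integral_comp_mul_left (fun y => y^2/(b+y^2)^4) c
  have e1 : (∫ x : ℝ, (c*x)^2/(b+(c*x)^2)^4) = (1/b^3) * ∫ x : ℝ, x^2/(1+x^2)^4 := by
    rw [← MeasureTheory.integral_const_mul]
    congr 1; ext x
    have h1 : (0:ℝ) < 1 + x^2 := by positivity
    have : b + (c*x)^2 = b * (1+x^2) := by rw [mul_pow, hc2]; ring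
    rw [this, mul_pow, mul_pow, hc2]
    field_simp
  rw [e1, integral1, smul_eq_mul, abs_of_nonneg (by positivity)] at key
  have : (∫ y : ℝ, y^2/(b + y^2)^4) = c * ((1/b^3) * (π/16)) := by
    field_simp at key ⊢
    linarith [key]
  rw [this]; ring

/-! The outer integral -/

noncomputable def G1 (t : ℝ) : ℝ :=
  (1/3) * (t / Real.sqrt (1+t^2)) - (1/3) * (t / (Real.sqrt (1+t^2))^3)

lemma sqrt_pos' (t : ℝ) : 0 < Real.sqrt (1+t^2) := Real.sqrt_pos.2 (by positivity)
lemma sqrt_sq' (t : ℝ) : (Real.sqrt (1+t^2))^2 = 1+t^2 := Real.sq_sqrt (by positivity)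

lemma G1_hasDeriv (t : ℝ) :
    HasDerivAt G1 (t^2 * Real.sqrt (1+t^2) / (1+t^2)^3) t := by
  have hpos : (0:ℝ) < 1 + t^2 := by positivity
  set s := Real.sqrt (1+t^2) with hsdef
  have hs0 : 0 < s := sqrt_pos' t
  have hs2 : s^2 = 1+t^2 := sqrt_sq' t
  have hd : HasDerivAt (fun t : ℝ => 1 + t^2) (2*t) t := by
    simpa using ((hasDerivAt_pow 2 t).const_add 1)
  have hs : HasDerivAt (fun t : ℝ => Real.sqrt (1+t^2)) (1/(2*s) * (2*t)) t :=
    (Real.hasDerivAt_sqrt hpos.ne').comp t hd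
  have h1 : HasDerivAt (fun t : ℝ => t / Real.sqrt (1+t^2))
      ((1*s - t*(1/(2*s)*(2*t)))/s^2) t :=
    (hasDerivAt_id t).div hs hs0.ne'
  have h2 : HasDerivAt (fun t : ℝ => t / (Real.sqrt (1+t^2))^3)
      ((1*s^3 - t*(3*s^2*(1/(2*s)*(2*t))))/(s^3)^2) t :=
    (hasDerivAt_id t).div (hs.pow 3) (by positivity)
  have := (h1.const_mul (1/3:ℝ)).sub (h2.const_mul (1/3:ℝ))
  refine this.congr_deriv ?_
  rw [← hs2]
  field_simp
  linear_combination (s^2) * hs2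

lemma tend1_top : Tendsto (fun t : ℝ => t / Real.sqrt (1+t^2)) atTop (𝓝 1) := by
  have hlow : Tendsto (fun t : ℝ => 1 - t⁻¹) atTop (𝓝 1) := by
    have : Tendsto (fun t : ℝ => (1:ℝ) - t⁻¹) atTop (𝓝 (1 - 0)) :=
      Tendsto.sub tendsto_const_nhds tendsto_inv_atTop_zero
    simpa using this
  refine tendsto_of_tendsto_of_tendsto_of_le_of_le' hlow tendsto_const_nhds ?_ ?_
  · filter_upwards [eventually_ge_atTop (1:ℝ)] with t ht
    have hs0 := sqrt_pos' t
    have hs2 := sqrt_sq' t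
    set s := Real.sqrt (1+t^2)
    have hst : s ≤ 1 + t := by
      nlinarith [sq_nonneg (s - (1+t))]
    have e1 : (1:ℝ) - t⁻¹ = (t-1)/t := by field_simp
    rw [e1, div_le_div_iff₀ (by linarith) hs0]
    nlinarith
  · filter_upwards [eventually_ge_atTop (0:ℝ)] with t ht
    have hs0 := sqrt_pos' t
    have hs2 := sqrt_sq' t
    set s := Real.sqrt (1+t^2)
    rw [div_le_one hs0]
    nlinarith

lemma tend2_top : Tendsto (fun t : ℝ => t / (Real.sqrt (1+t^2))^3) atTop (𝓝 0) := by
  refine tendsto_of_tendsto_of_tendsto_of_le_of_le' tendsto_const_nhds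
    tendsto_inv_atTop_zero ?_ ?_
  · filter_upwards [eventually_ge_atTop (1:ℝ)] with t ht
    positivity
  · filter_upwards [eventually_ge_atTop (1:ℝ)] with t ht
    have hs0 := sqrt_pos' t
    have hs2 := sqrt_sq' t
    set s := Real.sqrt (1+t^2)
    have h1 : 1 ≤ s := by nlinarith
    rw [div_le_iff₀ (by positivity), inv_mul_eq_div, le_div_iff₀ (by linarith)]
    nlinarith [sq_nonneg (t-1), sq_nonneg (s*t)]

lemma G1_top : Tendsto G1 atTop (𝓝 (1/3)) := by
  have := (tend1_top.const_mul (1/3:ℝ)).sub (tend2_top.const_mul (1/3:ℝ))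
  rw [show (1:ℝ)/3 = (1/3)*1 - (1/3)*0 by ring]
  exact this.congr (fun t => rfl)

lemma G1_bot : Tendsto G1 atBot (𝓝 (-(1/3))) := by
  have h := (G1_top.comp tendsto_neg_atBot_atTop).neg
  exact h.congr (fun t => by
    simp only [Function.comp_apply]; unfold G1; rw [neg_sq]; ring)

lemma integrable2 : Integrable (fun t : ℝ => t^2 * Real.sqrt (1+t^2) / (1+t^2)^3) := by
  refine integrable_inv_one_add_sq.mono ?_ ?_
  · exact ((continuous_pow 2 |>.mul (by continuity)).div (by continuity)
      (fun t => by positivity)).aestronglyMeasurable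
  · filter_upwards with t
    have h : (0:ℝ) < 1 + t^2 := by positivity
    have hs0 := sqrt_pos' t
    have hs2 := sqrt_sq' t
    set s := Real.sqrt (1+t^2)
    rw [Real.norm_eq_abs, Real.norm_eq_abs, abs_of_nonneg (by positivity),
      abs_of_nonneg (by positivity), div_le_iff₀ (by positivity), inv_mul_eq_div,
      le_div_iff₀ (by positivity)]
    have h1 : s ≤ 1 + t^2 := by nlinarith
    nlinarith [sq_nonneg t, pow_pos h 2, mul_pos h h]

lemma integral2 : ∫ t : ℝ, t^2 * Real.sqrt (1+t^2) / (1+t^2)^3 = 2/3 := by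
  rw [MeasureTheory.integral_of_hasDerivAt_of_tendsto G1_hasDeriv integrable2 G1_bot G1_top]
  norm_num

/-! Assembly -/

lemma f_cont : Continuous (fun p : ℝ × ℝ => (8 * p.1 * p.2 / (1 + p.1^2 + p.2^2)^2)^2) := by
  apply Continuous.pow
  exact (by continuity : Continuous fun p : ℝ × ℝ => 8 * p.1 * p.2).div
    (by continuity) (fun p => by positivity)

lemma f_eq (x y : ℝ) :
    (8 * x * y / (1 + x^2 + y^2)^2)^2 = 64 * x^2 * (y^2/((1+x^2) + y^2)^4) := by
  have h : (0:ℝ) < 1 + x^2 + y^2 := by positivity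
  rw [div_pow]
  rw [show (1+x^2) + y^2 = 1 + x^2 + y^2 by ring]
  field_simp
  ring

lemma inner_integrable (x : ℝ) :
    Integrable (fun y : ℝ => (8 * x * y / (1 + x^2 + y^2)^2)^2) := by
  have := (integrable_inner (1+x^2) (by nlinarith [sq_nonneg x])).const_mul (64*x^2)
  exact this.congr (Filter.Eventually.of_forall fun y => (f_eq x y).symm)

lemma inner_value (x : ℝ) :
    ∫ y : ℝ, (8 * x * y / (1 + x^2 + y^2)^2)^2
      = (4*π) * (x^2 * Real.sqrt (1+x^2) / (1+x^2)^3) := by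
  calc ∫ y : ℝ, (8 * x * y / (1 + x^2 + y^2)^2)^2
      = ∫ y : ℝ, (64 * x^2) * (y^2/((1+x^2) + y^2)^4) := by
        congr 1; funext y; exact f_eq x y
    _ = (64 * x^2) * ∫ y : ℝ, y^2/((1+x^2) + y^2)^4 := MeasureTheory.integral_const_mul _ _
    _ = (64 * x^2) * (π/16 * (Real.sqrt (1+x^2) / (1+x^2)^3)) := by
        rw [inner_int (1+x^2) (by nlinarith [sq_nonneg x])]
    _ = (4*π) * (x^2 * Real.sqrt (1+x^2) / (1+x^2)^3) := by ring

lemma f_integrable :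
    Integrable (fun p : ℝ × ℝ => (8 * p.1 * p.2 / (1 + p.1^2 + p.2^2)^2)^2) := by
  rw [MeasureTheory.Measure.volume_eq_prod ℝ ℝ]
  refine (integrable_prod_iff ?_).2 ⟨?_, ?_⟩
  · exact f_cont.aestronglyMeasurable
  · exact Filter.Eventually.of_forall fun x => inner_integrable x
  · apply Integrable.congr ((integrable2.const_mul (4*π)).congr
      (Filter.Eventually.of_forall fun x => rfl))
    refine Filter.Eventually.of_forall fun x => ?_
    show (4*π) * (x^2 * Real.sqrt (1+x^2) / (1+x^2)^3) = _
    rw [← inner_value x]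
    congr 1; funext y
    rw [Real.norm_eq_abs, abs_of_nonneg (sq_nonneg _)]

theorem stmt14 :
    (1 / (8 * π)) *
      ∫ p : ℝ × ℝ, (8 * p.1 * p.2 / (1 + p.1^2 + p.2^2)^2)^2 = 1/3 := by
  have h1 : (∫ p : ℝ × ℝ, (8 * p.1 * p.2 / (1 + p.1^2 + p.2^2)^2)^2)
      = ∫ x : ℝ, ∫ y : ℝ, (8 * x * y / (1 + x^2 + y^2)^2)^2 := by
    have hf := f_integrable
    rw [MeasureTheory.Measure.volume_eq_prod ℝ ℝ] at hf ⊢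
    exact MeasureTheory.integral_prod _ hf
  rw [h1]
  have h2 : (∫ x : ℝ, ∫ y : ℝ, (8 * x * y / (1 + x^2 + y^2)^2)^2)
      = ∫ x : ℝ, (4*π) * (x^2 * Real.sqrt (1+x^2) / (1+x^2)^3) := by
    congr 1; funext x; exact inner_value x
  rw [h2, MeasureTheory.integral_const_mul, integral2]
  field_simp
  ring
end
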